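/- Let K̃ be a symmetric PSD n×n matrix of rank m and K a symmetric PSD n×n matrix, with K̃ + λI ⪯ (1+Δ₂)(K + λI) for λ > 0, Δ₂ ≥ 0. Then tr(K̃(K̃ + λI)^{-1}) ≤ tr(K(K + λI)^{-1}) + m·Δ₂/(1+Δ₂). -/

import Mathlib

open Matrix


lemma herm_dot {n : ℕ} {A : Matrix (Fin n) (Fin n) ℝ} (hA : A.IsHermitian)
    (u v : Fin n → ℝ) : u ⬝ᵥ A *ᵥ v = (A *ᵥ u) ⬝ᵥ v := by
  have hT : Aᵀ = A := by
    ext i j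
    have := congrFun (congrFun hA.eq i) j
    simpa using this
  rw [dotProduct_mulVec, ← mulVec_transpose, hT]

lemma conj_entry {n : ℕ} (M U : Matrix (Fin n) (Fin n) ℝ) (i : Fin n) :
    (star U * M * U) i i = (fun j => U j i) ⬝ᵥ M *ᵥ (fun j => U j i) := by
  simp only [mul_apply, dotProduct, mulVec, star_apply, star_trivial,
    Finset.sum_mul, Finset.mul_sum]
  rw [Finset.sum_comm]
  refine Finset.sum_congr rfl fun j _ => Finset.sum_congr rfl fun k _ => by ring

lemma smul_one_pd {n : ℕ} {l : ℝ} (hl : 0 < l) :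
    (l • (1 : Matrix (Fin n) (Fin n) ℝ)).PosDef := by
  have : l • (1 : Matrix (Fin n) (Fin n) ℝ) = diagonal (fun _ => l) := by
    ext i j
    by_cases h : i = j <;> simp [Matrix.one_apply, diagonal, h]
  rw [this]
  exact posDef_diagonal_iff.2 fun _ => hl

lemma quad_inv_le {n : ℕ} {A B : Matrix (Fin n) (Fin n) ℝ} {c : ℝ} (hc : 0 < c)
    (hA : A.PosDef) (hB : B.PosDef) (hAB : (c • B - A).PosSemidef) (x : Fin n → ℝ) :
    x ⬝ᵥ B⁻¹ *ᵥ x ≤ c * (x ⬝ᵥ A⁻¹ *ᵥ x) := by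
  set z := B⁻¹ *ᵥ x with hz
  set u := A⁻¹ *ᵥ x with hu
  have hdB : IsUnit B.det := isUnit_iff_ne_zero.2 hB.det_pos.ne'
  have hdA : IsUnit A.det := isUnit_iff_ne_zero.2 hA.det_pos.ne'
  have hBz : B *ᵥ z = x := by
    rw [hz, mulVec_mulVec, mul_nonsing_inv _ hdB, one_mulVec]
  have hAu : A *ᵥ u = x := by
    rw [hu, mulVec_mulVec, mul_nonsing_inv _ hdA, one_mulVec]
  set w := c • u - z with hw
  have h1 : 0 ≤ w ⬝ᵥ A *ᵥ w := by simpa using hA.posSemidef.dotProduct_mulVec_nonneg w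
  have h2 : 0 ≤ z ⬝ᵥ (c • B - A) *ᵥ z := by simpa using hAB.dotProduct_mulVec_nonneg z
  have h4 : u ⬝ᵥ (A *ᵥ z) = x ⬝ᵥ z := by rw [herm_dot hA.isHermitian, hAu]
  have h5 : z ⬝ᵥ (A *ᵥ u) = z ⬝ᵥ x := by rw [hAu]
  have h6 : u ⬝ᵥ (A *ᵥ u) = u ⬝ᵥ x := by rw [hAu]
  have e1 : w ⬝ᵥ A *ᵥ w = c^2 * (x ⬝ᵥ u) - 2*c*(x ⬝ᵥ z) + z ⬝ᵥ A *ᵥ z := by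
    rw [hw, mulVec_sub, mulVec_smul, sub_dotProduct, smul_dotProduct,
      dotProduct_sub, dotProduct_sub, dotProduct_smul, dotProduct_smul,
      smul_eq_mul, smul_eq_mul, smul_eq_mul, h4, h5, h6,
      dotProduct_comm z x, dotProduct_comm u x]
    ring
  have e2 : z ⬝ᵥ (c • B - A) *ᵥ z = c * (x ⬝ᵥ z) - z ⬝ᵥ A *ᵥ z := by
    rw [sub_mulVec, smul_mulVec, hBz, dotProduct_sub, dotProduct_smul,
      smul_eq_mul, dotProduct_comm z x]
  have hxB : x ⬝ᵥ B⁻¹ *ᵥ x = x ⬝ᵥ z := rfl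
  have hxA : x ⬝ᵥ A⁻¹ *ᵥ x = x ⬝ᵥ u := rfl
  rw [hxB, hxA]
  nlinarith [h1, h2, e1, e2, sq_nonneg c]

theorem stmt7 {n : ℕ} (K Kt : Matrix (Fin n) (Fin n) ℝ) (m : ℕ)
    (hK : K.PosSemidef) (hKt : Kt.PosSemidef) (hrank : Kt.rank = m)
    (l Δ₂ : ℝ) (hl : 0 < l) (hΔ : 0 ≤ Δ₂)
    (h : ((1 + Δ₂) • (K + l • 1) - (Kt + l • 1)).PosSemidef) :
    (Kt * (Kt + l • 1)⁻¹).trace ≤ (K * (K + l • 1)⁻¹).trace + m * (Δ₂ / (1 + Δ₂)) := by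
  have hc : (0:ℝ) < 1 + Δ₂ := by linarith
  set c : ℝ := 1 + Δ₂ with hcdef
  have hH := hKt.1
  set U : Matrix (Fin n) (Fin n) ℝ := (hH.eigenvectorUnitary : Matrix (Fin n) (Fin n) ℝ) with hUdef
  set μ := hH.eigenvalues with hμdef
  have hμ0 : ∀ i, 0 ≤ μ i := hKt.eigenvalues_nonneg
  have hμl : ∀ i, 0 < μ i + l := fun i => by linarith [hμ0 i]
  have hUs : star U * U = 1 := Unitary.coe_star_mul_self hH.eigenvectorUnitary
  have hUU : U * star U = 1 := Unitary.coe_mul_star_self hH.eigenvectorUnitary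
  have spec : Kt = U * diagonal μ * star U := by
    have := hH.spectral_theorem
    rwa [RCLike.ofReal_real_eq_id, Function.id_comp] at this
  have hA : (Kt + l • 1).PosDef := Matrix.PosDef.posSemidef_add hKt (smul_one_pd hl)
  have hB : (K + l • 1).PosDef := Matrix.PosDef.posSemidef_add hK (smul_one_pd hl)
  set A := Kt + l • (1 : Matrix (Fin n) (Fin n) ℝ) with hAdef
  set B := K + l • (1 : Matrix (Fin n) (Fin n) ℝ) with hBdef
  have specA : A = U * diagonal (fun i => μ i + l) * star U := by
    have h1 : (diagonal (fun i => μ i + l) : Matrix (Fin n) (Fin n) ℝ)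
        = diagonal μ + l • 1 := by
      ext i j
      by_cases hij : i = j <;> simp [diagonal, Matrix.one_apply, hij]
    rw [hAdef, spec, h1, mul_add, add_mul]
    congr 1
    rw [Matrix.mul_smul, Matrix.smul_mul, mul_one, hUU]
  have Ainv : A⁻¹ = U * diagonal (fun i => (μ i + l)⁻¹) * star U := by
    apply inv_eq_right_inv
    rw [specA]
    calc U * diagonal (fun i => μ i + l) * star U * (U * diagonal (fun i => (μ i + l)⁻¹) * star U)
        = U * diagonal (fun i => μ i + l) * (star U * U) * diagonal (fun i => (μ i + l)⁻¹) * star U := by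
          noncomm_ring
      _ = U * (diagonal (fun i => μ i + l) * diagonal (fun i => (μ i + l)⁻¹)) * star U := by
          rw [hUs, mul_one]; noncomm_ring
      _ = 1 := by
          rw [diagonal_mul_diagonal]
          have : (fun i => (μ i + l) * (μ i + l)⁻¹) = fun _ => (1:ℝ) := by
            funext i; exact mul_inv_cancel₀ (hμl i).ne'
          rw [this, diagonal_one, mul_one, hUU]
  have tKt : (Kt * A⁻¹).trace = ∑ i, μ i * (μ i + l)⁻¹ := by
    rw [Ainv, spec]
    have : U * diagonal μ * star U * (U * diagonal (fun i => (μ i + l)⁻¹) * star U)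
        = U * (diagonal μ * diagonal (fun i => (μ i + l)⁻¹)) * star U := by
      calc U * diagonal μ * star U * (U * diagonal (fun i => (μ i + l)⁻¹) * star U)
          = U * diagonal μ * (star U * U) * diagonal (fun i => (μ i + l)⁻¹) * star U := by
            noncomm_ring
        _ = _ := by rw [hUs, mul_one]; noncomm_ring
    rw [this, diagonal_mul_diagonal, trace_mul_cycle, hUs, Matrix.one_mul, trace_diagonal]
  have hdB : IsUnit B.det := isUnit_iff_ne_zero.2 hB.det_pos.ne'
  have tK : (K * B⁻¹).trace = (n : ℝ) - l * B⁻¹.trace := by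
    have hKB : K * B⁻¹ = 1 - l • B⁻¹ := by
      have : K = B - l • 1 := by rw [hBdef, add_sub_cancel_right]
      rw [this, Matrix.sub_mul, mul_nonsing_inv _ hdB, Matrix.smul_mul, Matrix.one_mul]
    rw [hKB, trace_sub, trace_smul, trace_one]
    simp
  set q : Fin n → ℝ := fun i => (fun j => U j i) ⬝ᵥ B⁻¹ *ᵥ (fun j => U j i) with hqdef
  have trB : B⁻¹.trace = ∑ i, q i := by
    have h1 : B⁻¹.trace = (star U * B⁻¹ * U).trace := by
      rw [trace_mul_cycle, hUU, Matrix.one_mul]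
    rw [h1, trace]
    exact Finset.sum_congr rfl fun i _ => by rw [Matrix.diag]; exact conj_entry _ _ i
  have xAx : ∀ i, (fun j => U j i) ⬝ᵥ A⁻¹ *ᵥ (fun j => U j i) = (μ i + l)⁻¹ := by
    intro i
    rw [← conj_entry]
    have : star U * A⁻¹ * U = diagonal (fun i => (μ i + l)⁻¹) := by
      rw [Ainv]
      calc star U * (U * diagonal (fun i => (μ i + l)⁻¹) * star U) * U
          = (star U * U) * diagonal (fun i => (μ i + l)⁻¹) * (star U * U) := by noncomm_ring
        _ = _ := by rw [hUs]; noncomm_ring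
    rw [this, diagonal_apply_eq]
  have linv : (l • (1 : Matrix (Fin n) (Fin n) ℝ))⁻¹ = l⁻¹ • 1 := by
    apply inv_eq_right_inv
    rw [smul_mul_smul_comm, Matrix.one_mul, mul_inv_cancel₀ hl.ne', one_smul]
  have xx : ∀ i, (fun j => U j i) ⬝ᵥ (l • (1 : Matrix (Fin n) (Fin n) ℝ))⁻¹ *ᵥ (fun j => U j i)
      = l⁻¹ := by
    intro i
    rw [linv, ← conj_entry]
    have : star U * (l⁻¹ • 1) * U = l⁻¹ • 1 := by
      rw [Matrix.mul_smul, Matrix.mul_one, Matrix.smul_mul, hUs]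
    rw [this]
    simp
  have hq1 : ∀ i, l * q i ≤ 1 := by
    intro i
    have hps : ((1:ℝ) • B - l • (1 : Matrix (Fin n) (Fin n) ℝ)).PosSemidef := by
      have e : (1:ℝ) • B - l • (1 : Matrix (Fin n) (Fin n) ℝ) = K := by
        rw [one_smul, hBdef, add_sub_cancel_right]
      rw [e]; exact hK
    have := quad_inv_le one_pos (smul_one_pd hl) hB hps (fun j => U j i)
    rw [xx i, one_mul] at this
    calc l * q i ≤ l * l⁻¹ := by
          exact mul_le_mul_of_nonneg_left this hl.le
      _ = 1 := mul_inv_cancel₀ hl.ne'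
  have hq2 : ∀ i, q i ≤ c * (μ i + l)⁻¹ := by
    intro i
    have := quad_inv_le hc hA hB h (fun j => U j i)
    rwa [xAx i] at this
  have hcard : (Finset.univ.filter (fun i => ¬ μ i = 0)).card = m := by
    have h1 := hH.rank_eq_card_non_zero_eigs
    rw [hrank, Fintype.card_subtype] at h1
    exact h1.symm
  have key : ∀ i, μ i * (μ i + l)⁻¹ + l * q i ≤ 1 + (if μ i = 0 then 0 else Δ₂ / c) := by
    intro i
    have ht := hμl i
    have hd : (μ i + l) * (μ i + l)⁻¹ = 1 := mul_inv_cancel₀ ht.ne'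
    have hinv0 : 0 < (μ i + l)⁻¹ := inv_pos.2 ht
    have hdc : c * (Δ₂ / c) = Δ₂ := mul_div_cancel₀ _ hc.ne'
    by_cases h0 : μ i = 0
    · rw [if_pos h0, h0, zero_mul, zero_add, add_zero]
      exact hq1 i
    · rw [if_neg h0]
      have h2 : l * q i ≤ c * (l * (μ i + l)⁻¹) := by
        have h3 := hq2 i
        calc l * q i ≤ l * (c * (μ i + l)⁻¹) := mul_le_mul_of_nonneg_left h3 hl.le
          _ = c * (l * (μ i + l)⁻¹) := by ring
      have hmu : μ i * (μ i + l)⁻¹ = 1 - l * (μ i + l)⁻¹ := by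
        have : μ i * (μ i + l)⁻¹ + l * (μ i + l)⁻¹ = 1 := by
          rw [← add_mul]; exact hd
        linarith
      rcases le_or_gt (c * (l * (μ i + l)⁻¹)) 1 with hct | hct
      · nlinarith [mul_nonneg hΔ (sub_nonneg.2 hct), mul_pos hl hinv0]
      · nlinarith [hq1 i, mul_pos hl hinv0]
  have sumg : ∑ i, (if μ i = 0 then (0:ℝ) else Δ₂ / c) = m * (Δ₂ / c) := by
    rw [Finset.sum_ite, Finset.sum_const_zero, Finset.sum_const, zero_add, hcard,
      nsmul_eq_mul]
  have hsum := Finset.sum_le_sum (fun i (_ : i ∈ Finset.univ) => key i)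
  rw [Finset.sum_add_distrib, Finset.sum_add_distrib, ← Finset.mul_sum, sumg,
    Finset.sum_const, Finset.card_univ, Fintype.card_fin, nsmul_eq_mul, mul_one] at hsum
  rw [tKt, tK, trB]
  linarith
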